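/- Let P be a dynamic program (transition system on states, where each modification δ induces a deterministic state transition). Suppose every state reachable from the initial state via insertion-only sequences is locally history independent: (H1) insertions commute, i.e., applying insertions δ₁δ₂ and δ₂δ₁ yield the same state; (H2) if tuple a is not in relation R of the state, then applying ins_R(a) followed by del_R(a) returns the same state; (H3) applying ins_R(a) when a is already in R, or del_R(a) when a is not in R, leaves the state unchanged. Then for any two modification sequences α₁, α₂ from the empty initial database that yield the same input database, the resulting states are equal (P is history independent). -/

import Mathlib

/-- A database over a relational schema: each relation symbol `R` (of arity
`ar R`) is assigned a relation over the domain `D`. -/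
def Database (ρ : Type*) (ar : ρ → ℕ) (D : Type*) :=
  (R : ρ) → Set (Fin (ar R) → D)

/-- A modification: insertion or deletion of a tuple into/from a relation. -/
inductive Modification (ρ : Type*) (ar : ρ → ℕ) (D : Type*) where
  | ins (R : ρ) (a : Fin (ar R) → D)
  | del (R : ρ) (a : Fin (ar R) → D)

/-- Applying a single modification to a database. -/
def applyMod {ρ : Type*} [DecidableEq ρ] {ar : ρ → ℕ} {D : Type*}
    (δ : Modification ρ ar D) (db : Database ρ ar D) : Database ρ ar D :=
  match δ with
  | .ins R a => Function.update db R (insert a (db R))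
  | .del R a => Function.update db R (db R \ {a})

/-- Applying a sequence of modifications (left to right). -/
def applySeq {ρ : Type*} [DecidableEq ρ] {ar : ρ → ℕ} {D : Type*}
    (α : List (Modification ρ ar D)) (db : Database ρ ar D) : Database ρ ar D :=
  α.foldl (fun d δ => applyMod δ d) db

/-- The empty database. -/
def emptyDb {ρ : Type*} {ar : ρ → ℕ} {D : Type*} : Database ρ ar D :=
  fun _ => ∅

/-- A dynamic program: a deterministic transition system on states `S`, where
each state carries an input database (`inp`), each modification induces a
deterministic state transition updating the input database with set semantics,
and the initial state has empty input database. -/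
structure DynProgram (ρ : Type*) [DecidableEq ρ] (ar : ρ → ℕ) (D : Type*)
    (S : Type*) where
  inp : S → Database ρ ar D
  step : Modification ρ ar D → S → S
  init : S
  inp_init : inp init = emptyDb
  inp_step : ∀ δ s, inp (step δ s) = applyMod δ (inp s)

/-- Applying a modification sequence to a state of a dynamic program. -/
def DynProgram.stepSeq {ρ : Type*} [DecidableEq ρ] {ar : ρ → ℕ} {D S : Type*}
    (P : DynProgram ρ ar D S) (α : List (Modification ρ ar D)) (s : S) : S :=
  α.foldl (fun t δ => P.step δ t) s

/-- A modification is an insertion. -/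
def Modification.IsInsertion {ρ : Type*} {ar : ρ → ℕ} {D : Type*}
    (δ : Modification ρ ar D) : Prop :=
  ∃ (R : ρ) (a : Fin (ar R) → D), δ = .ins R a

/-- A state is locally history independent: (H1) insertions commute, (H2)
inserting an absent tuple and then deleting it returns the same state, (H3)
inserting a present tuple or deleting an absent tuple leaves the state
unchanged. -/
def LocallyHI {ρ : Type*} [DecidableEq ρ] {ar : ρ → ℕ} {D S : Type*}
    (P : DynProgram ρ ar D S) (s : S) : Prop :=
  (∀ δ₁ δ₂ : Modification ρ ar D, δ₁.IsInsertion → δ₂.IsInsertion →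
      P.step δ₂ (P.step δ₁ s) = P.step δ₁ (P.step δ₂ s)) ∧
  (∀ (R : ρ) (a : Fin (ar R) → D), a ∉ P.inp s R →
      P.step (.del R a) (P.step (.ins R a) s) = s) ∧
  (∀ (R : ρ) (a : Fin (ar R) → D),
      (a ∈ P.inp s R → P.step (.ins R a) s = s) ∧
      (a ∉ P.inp s R → P.step (.del R a) s = s))

section Aux

variable {ρ : Type*} [DecidableEq ρ] {ar : ρ → ℕ} {D S : Type*}
  (P : DynProgram ρ ar D S)

lemma stepSeq_concat (α : List (Modification ρ ar D)) (δ : Modification ρ ar D)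
    (s : S) : P.stepSeq (α ++ [δ]) s = P.step δ (P.stepSeq α s) := by
  simp [DynProgram.stepSeq]

lemma inp_step_ins_same (s : S) (R : ρ) (b : Fin (ar R) → D) :
    P.inp (P.step (.ins R b) s) R = insert b (P.inp s R) := by
  rw [P.inp_step]; simp [applyMod]; exact Function.update_self _ _ _

lemma inp_step_ins_ne (s : S) {R R' : ρ} (hne : R' ≠ R) (b : Fin (ar R) → D) :
    P.inp (P.step (.ins R b) s) R' = P.inp s R' := by
  rw [P.inp_step]; simp [applyMod]; exact Function.update_of_ne hne _ _

variable (h : ∀ (α : List (Modification ρ ar D)),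
      (∀ δ ∈ α, δ.IsInsertion) → LocallyHI P (P.stepSeq α P.init))

include h

/-- Extraction: from an insertion-only sequence whose result contains `a` in
relation `R`, extract the insertion of `a`. -/
lemma extract_ins :
    ∀ β : List (Modification ρ ar D), (∀ δ ∈ β, δ.IsInsertion) →
    ∀ (R : ρ) (a : Fin (ar R) → D), a ∈ P.inp (P.stepSeq β P.init) R →
    ∃ β' : List (Modification ρ ar D), (∀ δ ∈ β', δ.IsInsertion) ∧
      a ∉ P.inp (P.stepSeq β' P.init) R ∧
      P.step (.ins R a) (P.stepSeq β' P.init) = P.stepSeq β P.init := by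
  intro β
  induction β using List.reverseRecOn with
  | nil =>
    intro _ R a ha
    simp [DynProgram.stepSeq, P.inp_init, emptyDb] at ha
  | append_singleton γ δ ih =>
    intro hβ R a ha
    have hγ : ∀ δ' ∈ γ, δ'.IsInsertion := fun δ' hδ' => hβ δ' (by simp [hδ'])
    obtain ⟨R', b, rfl⟩ := hβ δ (by simp)
    rw [stepSeq_concat] at ha ⊢
    by_cases hR : R' = R
    · subst hR
      by_cases hba : b = a
      · subst hba
        by_cases hmem : b ∈ P.inp (P.stepSeq γ P.init) R'
        · have heq : P.step (.ins R' b) (P.stepSeq γ P.init) = P.stepSeq γ P.init :=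
            ((h γ hγ).2.2 R' b).1 hmem
          rw [heq] at ha ⊢
          exact ih hγ R' b ha
        · exact ⟨γ, hγ, hmem, rfl⟩
      · have ha' : a ∈ P.inp (P.stepSeq γ P.init) R' := by
          rw [inp_step_ins_same] at ha
          rcases ha with h1 | h1
          · exact absurd h1.symm hba
          · exact h1
        obtain ⟨γ', hγ', hnot, hstep⟩ := ih hγ R' a ha'
        refine ⟨γ' ++ [.ins R' b], ?_, ?_, ?_⟩
        · intro δ' hδ'
          rcases List.mem_append.1 hδ' with h1 | h1
          · exact hγ' δ' h1
          · simp at h1; subst h1; exact ⟨R', b, rfl⟩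
        · rw [stepSeq_concat, inp_step_ins_same]
          intro hc
          rcases hc with h1 | h1
          · exact hba h1.symm
          · exact hnot h1
        · rw [stepSeq_concat]
          rw [(h γ' hγ').1 (.ins R' b) (.ins R' a) ⟨R', b, rfl⟩ ⟨R', a, rfl⟩,
            hstep]
    · have ha' : a ∈ P.inp (P.stepSeq γ P.init) R := by
        rwa [inp_step_ins_ne P _ (fun hc => hR hc.symm)] at ha
      obtain ⟨γ', hγ', hnot, hstep⟩ := ih hγ R a ha'
      refine ⟨γ' ++ [.ins R' b], ?_, ?_, ?_⟩
      · intro δ' hδ'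
        rcases List.mem_append.1 hδ' with h1 | h1
        · exact hγ' δ' h1
        · simp at h1; subst h1; exact ⟨R', b, rfl⟩
      · rw [stepSeq_concat, inp_step_ins_ne P _ (fun hc => hR hc.symm)]
        exact hnot
      · rw [stepSeq_concat]
        rw [(h γ' hγ').1 (.ins R' b) (.ins R a) ⟨R', b, rfl⟩ ⟨R, a, rfl⟩, hstep]

/-- Insertion-only sequences with empty resulting database yield `init`. -/
lemma empty_eq_init :
    ∀ β : List (Modification ρ ar D), (∀ δ ∈ β, δ.IsInsertion) →
    P.inp (P.stepSeq β P.init) = emptyDb → P.stepSeq β P.init = P.init := by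
  intro β
  induction β using List.reverseRecOn with
  | nil => intro _ _; rfl
  | append_singleton γ δ ih =>
    intro hβ hemp
    obtain ⟨R, b, rfl⟩ := hβ δ (by simp)
    rw [stepSeq_concat] at hemp
    have : b ∈ P.inp (P.step (.ins R b) (P.stepSeq γ P.init)) R := by
      rw [inp_step_ins_same]; exact Set.mem_insert _ _
    rw [hemp] at this
    exact absurd this (Set.notMem_empty b)

/-- Insertion-only sequences with equal resulting databases yield equal states. -/
lemma insOnly_eq :
    ∀ β₁ : List (Modification ρ ar D), (∀ δ ∈ β₁, δ.IsInsertion) →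
    ∀ β₂ : List (Modification ρ ar D), (∀ δ ∈ β₂, δ.IsInsertion) →
    P.inp (P.stepSeq β₁ P.init) = P.inp (P.stepSeq β₂ P.init) →
    P.stepSeq β₁ P.init = P.stepSeq β₂ P.init := by
  intro β₁
  induction β₁ using List.reverseRecOn with
  | nil =>
    intro _ β₂ hβ₂ hinp
    simp only [DynProgram.stepSeq, List.foldl_nil] at hinp ⊢
    rw [P.inp_init] at hinp
    exact (empty_eq_init P h β₂ hβ₂ hinp.symm).symm
  | append_singleton γ δ ih =>
    intro hβ₁ β₂ hβ₂ hinp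
    have hγ : ∀ δ' ∈ γ, δ'.IsInsertion := fun δ' hδ' => hβ₁ δ' (by simp [hδ'])
    obtain ⟨R, a, rfl⟩ := hβ₁ δ (by simp)
    rw [stepSeq_concat] at hinp ⊢
    by_cases hmem : a ∈ P.inp (P.stepSeq γ P.init) R
    · have heq : P.step (.ins R a) (P.stepSeq γ P.init) = P.stepSeq γ P.init :=
        ((h γ hγ).2.2 R a).1 hmem
      rw [heq] at hinp ⊢
      exact ih hγ β₂ hβ₂ hinp
    · have ha2 : a ∈ P.inp (P.stepSeq β₂ P.init) R := by
        rw [← hinp, inp_step_ins_same]; exact Set.mem_insert _ _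
      obtain ⟨β₂', hβ₂', hnot, hstep⟩ := extract_ins P h β₂ hβ₂ R a ha2
      have hinp' : P.inp (P.stepSeq γ P.init) = P.inp (P.stepSeq β₂' P.init) := by
        funext R'
        by_cases hR : R' = R
        · subst hR
          have e1 : insert a (P.inp (P.stepSeq γ P.init) R') =
              insert a (P.inp (P.stepSeq β₂' P.init) R') := by
            rw [← inp_step_ins_same, ← inp_step_ins_same, hinp, ← hstep]
          have := congrArg (· \ ({a} : Set (Fin (ar R') → D))) e1
          simpa [Set.insert_diff_self_of_notMem hmem,
            Set.insert_diff_self_of_notMem hnot] using this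
        · rw [← inp_step_ins_ne P (P.stepSeq γ P.init) hR a,
            ← inp_step_ins_ne P (P.stepSeq β₂' P.init) hR a, hinp, ← hstep]
      rw [ih hγ β₂' hβ₂' hinp', hstep]

/-- Every reachable state is reachable by an insertion-only sequence. -/
lemma exists_insOnly :
    ∀ α : List (Modification ρ ar D),
    ∃ β : List (Modification ρ ar D), (∀ δ ∈ β, δ.IsInsertion) ∧
      P.stepSeq β P.init = P.stepSeq α P.init := by
  intro α
  induction α using List.reverseRecOn with
  | nil => exact ⟨[], by simp, rfl⟩
  | append_singleton γ δ ih =>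
    obtain ⟨β, hβ, hst⟩ := ih
    rw [stepSeq_concat, ← hst]
    cases δ with
    | ins R a =>
      by_cases hmem : a ∈ P.inp (P.stepSeq β P.init) R
      · exact ⟨β, hβ, (((h β hβ).2.2 R a).1 hmem).symm⟩
      · exact ⟨β ++ [.ins R a], by
          intro δ' hδ'
          rcases List.mem_append.1 hδ' with h1 | h1
          · exact hβ δ' h1
          · simp at h1; subst h1; exact ⟨R, a, rfl⟩,
          by rw [stepSeq_concat]⟩
    | del R a =>
      by_cases hmem : a ∈ P.inp (P.stepSeq β P.init) R
      · obtain ⟨β', hβ', hnot, hstep⟩ := extract_ins P h β hβ R a hmem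
        refine ⟨β', hβ', ?_⟩
        rw [← hstep]
        exact ((h β' hβ').2.1 R a hnot).symm
      · exact ⟨β, hβ, (((h β hβ).2.2 R a).2 hmem).symm⟩

end Aux

/-- If every state reachable from the initial state by insertion-only sequences
is locally history independent, then the program is history independent: any
two modification sequences from the empty initial database yielding the same
input database yield the same state. -/
theorem historyIndependent_of_locallyHI {ρ : Type*} [DecidableEq ρ]
    {ar : ρ → ℕ} {D S : Type*} (P : DynProgram ρ ar D S)
    (h : ∀ (α : List (Modification ρ ar D)),
      (∀ δ ∈ α, δ.IsInsertion) → LocallyHI P (P.stepSeq α P.init)) :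
    ∀ α₁ α₂ : List (Modification ρ ar D),
      P.inp (P.stepSeq α₁ P.init) = P.inp (P.stepSeq α₂ P.init) →
      P.stepSeq α₁ P.init = P.stepSeq α₂ P.init := by
  intro α₁ α₂ hinp
  obtain ⟨β₁, hβ₁, hs₁⟩ := exists_insOnly P h α₁
  obtain ⟨β₂, hβ₂, hs₂⟩ := exists_insOnly P h α₂
  rw [← hs₁, ← hs₂]
  exact insOnly_eq P h β₁ hβ₁ β₂ hβ₂ (by rw [hs₁, hs₂]; exact hinp)
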